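/- Recovery bound for the ℓ_{1-2} regularization: Under the assumptions of the oracle theorem (b = A x̄ with x̄ s-sparse supported on S, A satisfies the ℓ_{1-2}-REC(s,s), and x* is in the level set {x : h(x) ≤ h(x̄)} of h(x) = ‖Ax−b‖_2^2 + λ(‖x‖_1 − ‖x‖_2)), it holds that ‖x* − x̄‖_2^2 ≤ (4 + max{(√s+1)/√s, 4/(√s−2)}²) · λ²(√s+1)² / φ⁴(s,s), provided s > 4. -/

import Mathlib

open Finset

noncomputable def l1 {k : ℕ} (x : Fin k → ℝ) : ℝ := ∑ i, |x i|

noncomputable def l2 {k : ℕ} (x : Fin k → ℝ) : ℝ := Real.sqrt (∑ i, (x i)^2)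

def restr {k : ℕ} (I : Finset (Fin k)) (x : Fin k → ℝ) : Fin k → ℝ :=
  fun i => if i ∈ I then x i else 0


def TLargest {k : ℕ} (x : Fin k → ℝ) (I : Finset (Fin k)) (t : ℕ) (T : Finset (Fin k)) : Prop :=
  T ⊆ Iᶜ ∧ T.card = min t Iᶜ.card ∧ ∀ i ∈ T, ∀ j ∈ Iᶜ \ T, |x j| ≤ |x i|

section Aux

lemma l2_nonneg {k : ℕ} (x : Fin k → ℝ) : 0 ≤ l2 x := Real.sqrt_nonneg _

lemma l2_sq {k : ℕ} (x : Fin k → ℝ) : (l2 x)^2 = ∑ i, (x i)^2 :=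
  Real.sq_sqrt (Finset.sum_nonneg fun i _ => sq_nonneg _)

lemma l2_eq_norm {k : ℕ} (x : Fin k → ℝ) :
    l2 x = ‖(WithLp.equiv 2 (Fin k → ℝ)).symm x‖ := by
  rw [EuclideanSpace.norm_eq]
  simp [l2, sq_abs]

lemma l2_add_le {k : ℕ} (x y : Fin k → ℝ) : l2 (x + y) ≤ l2 x + l2 y := by
  rw [l2_eq_norm, l2_eq_norm, l2_eq_norm]
  exact norm_add_le _ _

lemma l1_restr_eq {k : ℕ} (x : Fin k → ℝ) (I : Finset (Fin k)) :
    l1 (restr I x) = ∑ i ∈ I, |x i| := by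
  rw [l1, ← Finset.sum_subset (Finset.subset_univ I)]
  · exact Finset.sum_congr rfl fun i hi => by simp [restr, hi]
  · intro i _ hi; simp [restr, hi]

lemma l2_restr_sq {k : ℕ} (x : Fin k → ℝ) (I : Finset (Fin k)) :
    (l2 (restr I x))^2 = ∑ i ∈ I, (x i)^2 := by
  rw [l2_sq, ← Finset.sum_subset (Finset.subset_univ I)]
  · exact Finset.sum_congr rfl fun i hi => by simp [restr, hi]
  · intro i _ hi; simp [restr, hi]

lemma l1_restr_nonneg {k : ℕ} (x : Fin k → ℝ) (I : Finset (Fin k)) :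
    0 ≤ l1 (restr I x) := by
  rw [l1_restr_eq]; exact Finset.sum_nonneg fun i _ => abs_nonneg _

lemma l2_restr_mono {k : ℕ} (x : Fin k → ℝ) {I J : Finset (Fin k)} (h : I ⊆ J) :
    l2 (restr I x) ≤ l2 (restr J x) := by
  apply Real.sqrt_le_sqrt
  apply Finset.sum_le_sum
  intro i _
  by_cases hi : i ∈ I
  · simp [restr, hi, h hi]
  · simp only [restr, if_neg hi]
    have : (0:ℝ)^2 = 0 := by norm_num
    rw [this]
    positivity

lemma l1_restr_le_sqrt_card {k : ℕ} (x : Fin k → ℝ) (I : Finset (Fin k)) :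
    l1 (restr I x) ≤ Real.sqrt I.card * l2 (restr I x) := by
  have h2 : (l2 (restr I x))^2 = ∑ i ∈ I, (x i)^2 := l2_restr_sq x I
  have hcs : (∑ i ∈ I, |x i|) ^ 2 ≤ I.card * ∑ i ∈ I, |x i| ^ 2 := by
    exact_mod_cast sq_sum_le_card_mul_sum_sq (s := I) (f := fun i => |x i|)
  have hl1 : 0 ≤ ∑ i ∈ I, |x i| := Finset.sum_nonneg fun i _ => abs_nonneg _
  rw [l1_restr_eq]
  have hsq : (∑ i ∈ I, |x i|)^2 ≤ (Real.sqrt I.card * l2 (restr I x))^2 := by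
    rw [mul_pow, Real.sq_sqrt (Nat.cast_nonneg _), h2]
    simpa [sq_abs] using hcs
  have hr : 0 ≤ Real.sqrt I.card * l2 (restr I x) :=
    mul_nonneg (Real.sqrt_nonneg _) (l2_nonneg _)
  nlinarith

lemma exists_topk {k : ℕ} (f : Fin k → ℝ) (A : Finset (Fin k)) (t : ℕ) :
    ∃ T, T ⊆ A ∧ T.card = min t A.card ∧ ∀ i ∈ T, ∀ j ∈ A \ T, f j ≤ f i := by
  induction t with
  | zero => exact ⟨∅, by simp⟩
  | succ t ih =>
    obtain ⟨T, hTA, hcard, hprop⟩ := ih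
    by_cases hTeq : T = A
    · refine ⟨T, hTA, ?_, hprop⟩
      subst hTeq
      have : T.card ≤ t := by omega
      omega
    · have hne : (A \ T).Nonempty := by
        rw [Finset.sdiff_nonempty]
        intro hsub
        exact hTeq (Finset.Subset.antisymm hTA hsub)
      obtain ⟨j0, hj0, hmax⟩ := Finset.exists_max_image (A \ T) f hne
      have hj0A : j0 ∈ A := (Finset.mem_sdiff.mp hj0).1
      have hj0T : j0 ∉ T := (Finset.mem_sdiff.mp hj0).2
      have hlt : T.card < A.card := Finset.card_lt_card (lt_of_le_of_ne hTA hTeq)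
      have hcardt : T.card = t := by omega
      refine ⟨insert j0 T, Finset.insert_subset hj0A hTA, ?_, ?_⟩
      · rw [Finset.card_insert_of_notMem hj0T, hcardt]
        omega
      · intro i hi j hj
        have hjA : j ∈ A := (Finset.mem_sdiff.mp hj).1
        have hjT : j ∉ insert j0 T := (Finset.mem_sdiff.mp hj).2
        rcases Finset.mem_insert.mp hi with rfl | hiT
        · exact hmax j (Finset.mem_sdiff.mpr ⟨hjA, fun h => hjT (Finset.mem_insert_of_mem h)⟩)
        · exact hprop i hiT j (Finset.mem_sdiff.mpr ⟨hjA, fun h => hjT (Finset.mem_insert_of_mem h)⟩)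

lemma tail_bound {k : ℕ} (x : Fin k → ℝ) (S T : Finset (Fin k)) (s : ℕ)
    (hT : T ⊆ Sᶜ) (hcard : T.card = min s Sᶜ.card)
    (hp : ∀ i ∈ T, ∀ j ∈ Sᶜ \ T, |x j| ≤ |x i|) :
    Real.sqrt s * l2 (restr (S ∪ T)ᶜ x) ≤ l1 (restr Sᶜ x) := by
  by_cases hc : Sᶜ.card < s
  · have hTeq : T = Sᶜ := Finset.eq_of_subset_of_card_le hT (by omega)
    have hempty : (S ∪ T)ᶜ = (∅ : Finset (Fin k)) := by
      rw [hTeq, Finset.union_compl, Finset.compl_univ]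
    have hz : l2 (restr (S ∪ T)ᶜ x) = 0 := by
      have h0 : (l2 (restr (S ∪ T)ᶜ x))^2 = 0 := by rw [l2_restr_sq, hempty]; simp
      nlinarith [l2_nonneg (restr (S ∪ T)ᶜ x)]
    rw [hz, mul_zero]
    exact l1_restr_nonneg x Sᶜ
  · push_neg at hc
    have hTcard : T.card = s := by omega
    set L : ℝ := l1 (restr Sᶜ x) with hLdef
    have hL0 : 0 ≤ L := l1_restr_nonneg x Sᶜ
    have hcompl : (S ∪ T)ᶜ = Sᶜ \ T := by
      ext i; simp [Finset.mem_compl, Finset.mem_sdiff, Finset.mem_union]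
    have hpt : ∀ j ∈ Sᶜ \ T, (s:ℝ) * |x j| ≤ L := by
      intro j hj
      have h1 : (s:ℝ) * |x j| = ∑ _i ∈ T, |x j| := by
        rw [Finset.sum_const, hTcard]; simp [mul_comm]
      rw [h1]
      calc ∑ _i ∈ T, |x j| ≤ ∑ i ∈ T, |x i| :=
            Finset.sum_le_sum fun i hi => hp i hi j hj
      _ ≤ ∑ i ∈ Sᶜ, |x i| :=
            Finset.sum_le_sum_of_subset_of_nonneg hT fun i _ _ => abs_nonneg _
      _ = L := (l1_restr_eq x Sᶜ).symm
    have hsv : (s:ℝ) * (l2 (restr (S ∪ T)ᶜ x))^2 ≤ L^2 := by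
      rw [l2_restr_sq, hcompl, Finset.mul_sum]
      have step1 : ∑ j ∈ Sᶜ \ T, (s:ℝ) * (x j)^2 ≤ ∑ j ∈ Sᶜ \ T, L * |x j| := by
        apply Finset.sum_le_sum
        intro j hj
        have := hpt j hj
        have habs : (x j)^2 = |x j| * |x j| := by rw [← sq_abs]; ring
        nlinarith [abs_nonneg (x j)]
      have step2 : ∑ j ∈ Sᶜ \ T, L * |x j| ≤ L * L := by
        rw [← Finset.mul_sum]
        have hsub : ∑ j ∈ Sᶜ \ T, |x j| ≤ L := by
          rw [hLdef, l1_restr_eq]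
          exact Finset.sum_le_sum_of_subset_of_nonneg (Finset.sdiff_subset)
            fun i _ _ => abs_nonneg _
        nlinarith [Finset.sum_nonneg (fun j (_ : j ∈ Sᶜ \ T) => abs_nonneg (x j))]
      calc ∑ j ∈ Sᶜ \ T, (s:ℝ) * (x j)^2 ≤ L * L := le_trans step1 step2
      _ = L^2 := (sq L).symm
    have hv0 : 0 ≤ l2 (restr (S ∪ T)ᶜ x) := l2_nonneg _
    have hst : Real.sqrt s * Real.sqrt s = (s:ℝ) := Real.mul_self_sqrt (Nat.cast_nonneg s)
    nlinarith [hsv, hv0, hL0, Real.sqrt_nonneg (s:ℝ), hst]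

lemma poly_ineq (t : ℝ) (ht : 2 < t) :
    2*t^2*(t^2+1)*(t-2)^2 ≤ (4*(t-2)^2+16)*(t-1)^4 := by
  nlinarith [mul_nonneg (sq_nonneg (t-2)) (sq_nonneg ((t-2)^2 - 5/2)),
    pow_nonneg (by linarith : (0:ℝ) ≤ t - 2) 3, sq_nonneg (t-2), sq_nonneg t]

lemma scalar_lemma (t lam φ u v C : ℝ) (ht : 2 < t) (hlam : 0 < lam) (hφ : 0 < φ)
    (hu : 0 ≤ u) (hv : 0 ≤ v) (h1 : φ^2*u^2 ≤ lam*((t+1)*u + v)) (h2 : t*v ≤ (t+1)*u + v)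
    (hC : 4/(t-2) ≤ C) : u^2 + v^2 ≤ (4 + C^2) * lam^2 * (t+1)^2 / φ^4 := by
  have ht1 : (0:ℝ) < t - 1 := by linarith
  have ht2 : (0:ℝ) < t - 2 := by linarith
  have hφ2 : (0:ℝ) < φ^2 := by positivity
  set K : ℝ := lam / φ^2 with hKdef
  have hK : 0 < K := by positivity
  have h1' : u^2 ≤ K*((t+1)*u + v) := by
    rw [hKdef, div_mul_eq_mul_div, le_div_iff₀ hφ2]
    nlinarith [h1]
  have hv2 : v * (t-1) ≤ (t+1)*u := by nlinarith [h2]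
  have hu1 : u^2*(t-1) ≤ K*(t+1)*t*u := by
    nlinarith [mul_le_mul_of_nonneg_right h1' ht1.le, mul_le_mul_of_nonneg_left hv2 hK.le]
  have hub : u*(t-1) ≤ K*(t+1)*t := by
    rcases hu.eq_or_lt with h | h
    · rw [← h]
      have : (0:ℝ) < K*(t+1)*t := by positivity
      linarith
    · nlinarith [hu1, mul_pos h ht1]
  set E : ℝ := (t-1)^2 with hEdef
  set D : ℝ := (t-2)^2 with hDdef
  have hE : 0 < E := by positivity
  have hD : 0 < D := by positivity
  set Q : ℝ := K^2*(t+1)^2 with hQdef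
  have hQ : 0 ≤ Q := by positivity
  have hUE : u^2 * E ≤ Q * t^2 := by
    have h := mul_self_le_mul_self (mul_nonneg hu ht1.le) hub
    calc u^2*E = u*(t-1)*(u*(t-1)) := by rw [hEdef]; ring
    _ ≤ (K*(t+1)*t)*(K*(t+1)*t) := h
    _ = Q*t^2 := by rw [hQdef]; ring
  have hVE : v^2 * E ≤ (t+1)^2 * u^2 := by
    have h := mul_self_le_mul_self (mul_nonneg hv ht1.le) hv2
    calc v^2*E = v*(t-1)*(v*(t-1)) := by rw [hEdef]; ring
    _ ≤ ((t+1)*u)*((t+1)*u) := h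
    _ = (t+1)^2*u^2 := by ring
  have hPE : (u^2 + v^2) * E^2 ≤ Q * (2*t^2*(t^2+1)) := by
    have a1 : v^2*E*E ≤ (t+1)^2*u^2*E := mul_le_mul_of_nonneg_right hVE hE.le
    have a2 : (t+1)^2*u^2*E = (t+1)^2*(u^2*E) := by ring
    have a3 : (t+1)^2*(u^2*E) ≤ (t+1)^2*(Q*t^2) :=
      mul_le_mul_of_nonneg_left hUE (by positivity)
    have a4 : u^2*E*E ≤ Q*t^2*E := mul_le_mul_of_nonneg_right hUE hE.le
    have a5 : Q*t^2*E + (t+1)^2*(Q*t^2) = Q*(2*t^2*(t^2+1)) := by rw [hEdef]; ring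
    have a6 : (u^2+v^2)*E^2 = u^2*E*E + v^2*E*E := by ring
    linarith
  have hpoly := poly_ineq t ht
  have hPD : (u^2 + v^2) * D ≤ Q * (4*D+16) := by
    have hE2 : (0:ℝ) < E^2 := by positivity
    have c : (u^2+v^2) * D * E^2 ≤ Q * (4*D+16) * E^2 := by
      calc (u^2+v^2) * D * E^2 = (u^2+v^2) * E^2 * D := by ring
      _ ≤ Q * (2*t^2*(t^2+1)) * D := mul_le_mul_of_nonneg_right hPE hD.le
      _ = Q * (2*t^2*(t^2+1)*(t-2)^2) := by rw [hDdef]; ring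
      _ ≤ Q * ((4*(t-2)^2+16)*(t-1)^4) := mul_le_mul_of_nonneg_left hpoly hQ
      _ = Q * (4*D+16) * E^2 := by rw [hDdef, hEdef]; ring
    exact le_of_mul_le_mul_right c hE2
  have hfin : u^2 + v^2 ≤ (4 + 16/D) * Q := by
    rw [show (4 + 16/D) * Q = Q * (4*D+16) / D by field_simp, le_div_iff₀ hD]
    linarith [hPD]
  have hC2 : 16/D ≤ C^2 := by
    have h0 : (0:ℝ) < 4/(t-2) := by positivity
    calc 16/D = (4/(t-2))*(4/(t-2)) := by rw [hDdef]; field_simp; ring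
    _ ≤ C*C := mul_self_le_mul_self h0.le hC
    _ = C^2 := (sq C).symm
  have hmono : (4 + 16/D) * Q ≤ (4 + C^2) * Q := mul_le_mul_of_nonneg_right (by linarith) hQ
  have hfinal : u^2 + v^2 ≤ (4 + C^2) * Q := le_trans hfin hmono
  rw [hQdef, hKdef] at hfinal
  calc u^2+v^2 ≤ (4 + C^2) * ((lam/φ^2)^2 * (t+1)^2) := hfinal
  _ = (4 + C^2) * lam^2 * (t+1)^2 / φ^4 := by field_simp

end Aux

theorem stmt13 {m n : ℕ} (A : Matrix (Fin m) (Fin n) ℝ) (xbar xstar : Fin n → ℝ)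
    (b : Fin m → ℝ) (S : Finset (Fin n)) (s : ℕ) (lam φ : ℝ) (hlam : 0 < lam)
    (hs : 4 < s)
    (hb : b = A.mulVec xbar) (hsupp : ∀ i, xbar i ≠ 0 ↔ i ∈ S) (hcardS : S.card = s)
    (hφ : 0 < φ)
    (hREC : ∀ (x : Fin n → ℝ) (I T : Finset (Fin n)), I.card ≤ s →
      l1 (restr Iᶜ x) ≤ l1 (restr I x) + l2 x → TLargest x I s T →
      φ * l2 (restr (I ∪ T) x) ≤ l2 (A.mulVec x))
    (hlev : (l2 (A.mulVec xstar - b))^2 + lam * (l1 xstar - l2 xstar) ≤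
            (l2 (A.mulVec xbar - b))^2 + lam * (l1 xbar - l2 xbar)) :
    (l2 (xstar - xbar))^2 ≤
      (4 + (max ((Real.sqrt s + 1) / Real.sqrt s) (4 / (Real.sqrt s - 2)))^2) *
        lam^2 * (Real.sqrt s + 1)^2 / φ^4 := by
  set t := Real.sqrt (s : ℝ) with htdef
  have hsr : (4:ℝ) < (s:ℝ) := by exact_mod_cast hs
  have ht : 2 < t := by
    rw [htdef]
    have h4 : Real.sqrt 4 = 2 := by
      rw [show (4:ℝ) = 2^2 by norm_num, Real.sqrt_sq (by norm_num : (0:ℝ) ≤ 2)]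
    have := Real.sqrt_lt_sqrt (by norm_num : (0:ℝ) ≤ 4) hsr
    linarith
  set h := xstar - xbar with hhdef
  have hAh : A.mulVec xstar - b = A.mulVec h := by
    rw [hb, hhdef, Matrix.mulVec_sub]
  have hb0 : A.mulVec xbar - b = 0 := by rw [hb, sub_self]
  rw [hAh, hb0] at hlev
  have hl20 : l2 (0 : Fin m → ℝ) = 0 := by simp [l2]
  rw [hl20] at hlev
  have hxbar0 : ∀ i ∈ Sᶜ, xbar i = 0 := by
    intro i hi
    by_contra hne
    exact (Finset.mem_compl.mp hi) ((hsupp i).mp hne)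
  set a := l1 (restr S h) with hadef
  set c := l1 (restr Sᶜ h) with hcdef
  -- l1 comparison
  have hl1 : l1 xbar - l1 xstar ≤ a - c := by
    have e1 : l1 xstar = ∑ i ∈ S, |xstar i| + ∑ i ∈ Sᶜ, |xstar i| := by
      rw [l1, ← Finset.sum_add_sum_compl S]
    have e2 : l1 xbar = ∑ i ∈ S, |xbar i| + ∑ i ∈ Sᶜ, |xbar i| := by
      rw [l1, ← Finset.sum_add_sum_compl S]
    have e3 : a = ∑ i ∈ S, |h i| := l1_restr_eq h S
    have e4 : c = ∑ i ∈ Sᶜ, |h i| := l1_restr_eq h Sᶜ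
    have f1 : ∑ i ∈ S, |xbar i| - ∑ i ∈ S, |xstar i| ≤ ∑ i ∈ S, |h i| := by
      rw [← Finset.sum_sub_distrib]
      apply Finset.sum_le_sum
      intro i _
      calc |xbar i| - |xstar i| ≤ |xbar i - xstar i| := abs_sub_abs_le_abs_sub _ _
      _ = |h i| := by rw [hhdef, abs_sub_comm]; simp [Pi.sub_apply]
    have f2 : ∑ i ∈ Sᶜ, |xbar i| = 0 :=
      Finset.sum_eq_zero fun i hi => by rw [hxbar0 i hi, abs_zero]
    have f3 : ∑ i ∈ Sᶜ, |xstar i| = ∑ i ∈ Sᶜ, |h i| := by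
      apply Finset.sum_congr rfl
      intro i hi
      rw [hhdef]
      simp [Pi.sub_apply, hxbar0 i hi]
    linarith
  -- l2 triangle
  have hl2t : l2 xstar ≤ l2 xbar + l2 h := by
    have hxs : xstar = xbar + h := by rw [hhdef]; abel
    rw [hxs]
    exact l2_add_le xbar h
  have hstar : (l2 (A.mulVec h))^2 ≤ lam * (a - c + l2 h) := by
    have key : l1 xbar - l2 xbar - (l1 xstar - l2 xstar) ≤ a - c + l2 h := by linarith
    have hm := mul_le_mul_of_nonneg_left key hlam.le
    nlinarith [hlev]
  have hcone : c ≤ a + l2 h := by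
    have h0 : 0 ≤ lam * (a - c + l2 h) := le_trans (sq_nonneg _) hstar
    nlinarith [h0, hlam]
  obtain ⟨T, hTsub, hTcard, hTprop⟩ := exists_topk (fun i => |h i|) Sᶜ s
  have hTL : TLargest h S s T := ⟨hTsub, hTcard, hTprop⟩
  have hu := hREC h S T (le_of_eq hcardS) hcone hTL
  set u := l2 (restr (S ∪ T) h) with hudef
  set v := l2 (restr (S ∪ T)ᶜ h) with hvdef
  have hu0 : 0 ≤ u := l2_nonneg _
  have hv0 : 0 ≤ v := l2_nonneg _
  have hφu : φ^2 * u^2 ≤ (l2 (A.mulVec h))^2 := by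
    nlinarith [hu, mul_nonneg hφ.le hu0, l2_nonneg (A.mulVec h)]
  have ha : a ≤ t * u := by
    calc a ≤ Real.sqrt S.card * l2 (restr S h) := l1_restr_le_sqrt_card h S
    _ ≤ t * u := by
        rw [hcardS]
        exact mul_le_mul_of_nonneg_left (l2_restr_mono h Finset.subset_union_left)
          (Real.sqrt_nonneg _)
  have hv : t * v ≤ c := tail_bound h S T s hTsub hTcard hTprop
  have hLuv : (l2 h)^2 = u^2 + v^2 := by
    rw [l2_sq, hudef, hvdef, l2_restr_sq, l2_restr_sq, Finset.sum_add_sum_compl]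
  have hLle : l2 h ≤ u + v := by
    nlinarith [l2_nonneg h, hu0, hv0, hLuv]
  have hc0 : 0 ≤ c := l1_restr_nonneg h Sᶜ
  have h1 : φ^2*u^2 ≤ lam*((t+1)*u + v) := by
    have hkey : a - c + l2 h ≤ (t+1)*u + v := by linarith
    have := mul_le_mul_of_nonneg_left hkey hlam.le
    linarith [hφu, hstar]
  have h2 : t*v ≤ (t+1)*u + v := by linarith
  have hC : 4/(t-2) ≤ max ((t+1)/t) (4/(t-2)) := le_max_right _ _
  have hres := scalar_lemma t lam φ u v (max ((t+1)/t) (4/(t-2))) ht hlam hφ hu0 hv0 h1 h2 hC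
  rw [hLuv]
  exact hres
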